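/- Let |v⟩ be a simultaneous eigenvector of Q₀, Q₀P₀Q₀, Q₀P₁Q₀ with Q₀|v⟩ = |v⟩, where P₀+P₁ = I and Q₀+Q₁ = I are pairs of complementary orthogonal projections, and suppose P₀|v⟩ ≠ 0 and P₁|v⟩ ≠ 0. Then the two-dimensional subspace spanned by P₀|v⟩ and P₁|v⟩ contains |v⟩, is invariant under P₀, P₁, Q₀, Q₁, and P₀|v⟩ ⊥ P₁|v⟩. -/

import Mathlib

theorem stmt_11 {H : Type*} [NormedAddCommGroup H] [InnerProductSpace ℂ H]
    [FiniteDimensional ℂ H]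
    (P₀ P₁ Q₀ Q₁ : H →ₗ[ℂ] H)
    (hP₀ : P₀ * P₀ = P₀) (hP₁ : P₁ * P₁ = P₁)
    (hQ₀ : Q₀ * Q₀ = Q₀) (hQ₁ : Q₁ * Q₁ = Q₁)
    (hP₀s : P₀.IsSymmetric) (hP₁s : P₁.IsSymmetric)
    (hQ₀s : Q₀.IsSymmetric) (hQ₁s : Q₁.IsSymmetric)
    (hP : P₀ + P₁ = 1) (hQ : Q₀ + Q₁ = 1)
    (v : H) (hv : Q₀ v = v)
    (lam₁ lam₂ : ℂ)
    (heig₀ : Q₀ (P₀ (Q₀ v)) = lam₁ • v)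
    (heig₁ : Q₀ (P₁ (Q₀ v)) = lam₂ • v)
    (hP₀v : P₀ v ≠ 0) (hP₁v : P₁ v ≠ 0) :
    v ∈ Submodule.span ℂ ({P₀ v, P₁ v} : Set H) ∧
    (∀ x ∈ Submodule.span ℂ ({P₀ v, P₁ v} : Set H),
      P₀ x ∈ Submodule.span ℂ ({P₀ v, P₁ v} : Set H) ∧
      P₁ x ∈ Submodule.span ℂ ({P₀ v, P₁ v} : Set H) ∧
      Q₀ x ∈ Submodule.span ℂ ({P₀ v, P₁ v} : Set H) ∧
      Q₁ x ∈ Submodule.span ℂ ({P₀ v, P₁ v} : Set H)) ∧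
    (inner ℂ (P₀ v) (P₁ v) : ℂ) = 0 ∧
    Module.finrank ℂ (Submodule.span ℂ ({P₀ v, P₁ v} : Set H)) = 2 := by
  rw [hv] at heig₀ heig₁
  set S := Submodule.span ℂ ({P₀ v, P₁ v} : Set H) with hS
  have hsum : P₀ v + P₁ v = v := by
    have := congrArg (fun T : H →ₗ[ℂ] H => T v) hP
    simpa using this
  have hw₀S : P₀ v ∈ S := Submodule.subset_span (by left; rfl)
  have hw₁S : P₁ v ∈ S := Submodule.subset_span (by right; rfl)
  have hvS : v ∈ S := hsum ▸ add_mem hw₀S hw₁S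
  have hP00 : P₀ (P₀ v) = P₀ v := by
    have := congrArg (fun T : H →ₗ[ℂ] H => T v) hP₀
    simpa [Module.End.mul_apply] using this
  have hP11 : P₁ (P₁ v) = P₁ v := by
    have := congrArg (fun T : H →ₗ[ℂ] H => T v) hP₁
    simpa [Module.End.mul_apply] using this
  have hw1eq : P₁ v = v - P₀ v := eq_sub_of_add_eq' hsum
  have hw0eq : P₀ v = v - P₁ v := eq_sub_of_add_eq hsum
  have hP01 : P₀ (P₁ v) = 0 := by rw [hw1eq, map_sub, hP00, sub_self]
  have hP10 : P₁ (P₀ v) = 0 := by rw [hw0eq, map_sub, hP11, sub_self]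
  have hQ1eq : ∀ x : H, Q₁ x = x - Q₀ x := by
    intro x
    have := congrArg (fun T : H →ₗ[ℂ] H => T x) hQ
    simp only [LinearMap.add_apply, Module.End.one_apply] at this
    exact (eq_sub_of_add_eq' this)
  have hinv : ∀ x ∈ S, P₀ x ∈ S ∧ P₁ x ∈ S ∧ Q₀ x ∈ S ∧ Q₁ x ∈ S := by
    have key : ∀ (T : H →ₗ[ℂ] H), T (P₀ v) ∈ S → T (P₁ v) ∈ S →
        ∀ x ∈ S, T x ∈ S := by
      intro T h0 h1 x hx
      have hle : S ≤ S.comap T := by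
        rw [hS, Submodule.span_le]
        rintro y hy
        simp only [Set.mem_insert_iff, Set.mem_singleton_iff] at hy
        rcases hy with rfl | rfl
        · exact h0
        · exact h1
      exact hle hx
    intro x hx
    refine ⟨key P₀ (by rw [hP00]; exact hw₀S) (by rw [hP01]; exact S.zero_mem) x hx,
      key P₁ (by rw [hP10]; exact S.zero_mem) (by rw [hP11]; exact hw₁S) x hx,
      key Q₀ (by rw [heig₀]; exact S.smul_mem _ hvS) (by rw [heig₁]; exact S.smul_mem _ hvS) x hx,
      key Q₁ ?_ ?_ x hx⟩
    · rw [hQ1eq, heig₀]; exact S.sub_mem hw₀S (S.smul_mem _ hvS)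
    · rw [hQ1eq, heig₁]; exact S.sub_mem hw₁S (S.smul_mem _ hvS)
  -- inner product computations
  have hvne : v ≠ 0 := fun h => hP₀v (by rw [h, map_zero])
  have hane : (inner ℂ v v : ℂ) ≠ 0 := inner_self_ne_zero.mpr hvne
  have h1 : (inner ℂ v (P₀ v) : ℂ) = lam₁ * inner ℂ v v := by
    calc (inner ℂ v (P₀ v) : ℂ) = inner ℂ (Q₀ v) (P₀ v) := by rw [hv]
      _ = inner ℂ v (Q₀ (P₀ v)) := hQ₀s v (P₀ v)
      _ = inner ℂ v (lam₁ • v) := by rw [heig₀]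
      _ = lam₁ * inner ℂ v v := inner_smul_right _ _ _
  have h2 : (inner ℂ (P₀ v) (P₀ v) : ℂ) = lam₁ * inner ℂ v v := by
    calc (inner ℂ (P₀ v) (P₀ v) : ℂ) = inner ℂ v (P₀ (P₀ v)) := hP₀s v (P₀ v)
      _ = inner ℂ v (P₀ v) := by rw [hP00]
      _ = lam₁ * inner ℂ v v := h1
  have hconj : starRingEnd ℂ lam₁ = lam₁ := by
    have hc := congrArg (starRingEnd ℂ) h2
    rw [inner_conj_symm, map_mul, inner_conj_symm, h2] at hc
    exact mul_right_cancel₀ hane hc.symm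
  have h3 : (inner ℂ (P₀ v) v : ℂ) = lam₁ * inner ℂ v v := by
    rw [← inner_conj_symm, h1, map_mul, inner_conj_symm, hconj]
  have hperp : (inner ℂ (P₀ v) (P₁ v) : ℂ) = 0 := by
    rw [hw1eq, inner_sub_right, h3, h2, sub_self]
  have hperp' : (inner ℂ (P₁ v) (P₀ v) : ℂ) = 0 := by
    rw [← inner_conj_symm, hperp, map_zero]
  refine ⟨hvS, hinv, hperp, ?_⟩
  have hlin : LinearIndependent ℂ ![P₀ v, P₁ v] := by
    rw [linearIndependent_fin2]
    refine ⟨by simpa using hP₁v, fun a ha => ?_⟩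
    simp only [Matrix.cons_val_one, Matrix.head_cons, Matrix.cons_val_zero] at ha
    have : (inner ℂ (P₁ v) (a • P₁ v) : ℂ) = 0 := by rw [ha]; exact hperp'
    rw [inner_smul_right] at this
    have hbne : (inner ℂ (P₁ v) (P₁ v) : ℂ) ≠ 0 := inner_self_ne_zero.mpr hP₁v
    rcases mul_eq_zero.mp this with h | h
    · apply hP₀v; rw [← ha, h, zero_smul]
    · exact hbne h
  have := finrank_span_eq_card hlin
  have hrange : Set.range ![P₀ v, P₁ v] = ({P₀ v, P₁ v} : Set H) := by
    simp [Matrix.range_cons, Matrix.range_empty]; exact Set.pair_comm _ _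
  rw [hrange] at this
  simpa using this
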